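/- Let f_{n}(s,t) denote the number of (6,1)-locally balanced binary words of length n whose first s entries have Hamming weight t. Then f_{n+2}(5,2) = f_{n+1}(4,1) + f_{n+1}(4,2) and f_{n+2}(5,3) = f_{n+1}(4,2) + f_{n+1}(4,3). -/

import Mathlib

/-- Hamming weight of the substring of `x` of length `l` starting at (0-based) position `i`. -/
def subWt (n : ℕ) (x : Fin n → Bool) (i l : ℕ) : ℕ :=
  (Finset.univ.filter (fun j : Fin n => i ≤ (j : ℕ) ∧ (j : ℕ) < i + l ∧ x j = true)).card

/-- `x` is `(l, δ)`-locally balanced: every consecutive substring of length `l` has weight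
between `l/2 - δ` and `l/2 + δ`. -/
def locBal (l δ n : ℕ) (x : Fin n → Bool) : Prop :=
  ∀ i : ℕ, i + l ≤ n →
    (l : ℤ) / 2 - δ ≤ (subWt n x i l : ℤ) ∧ (subWt n x i l : ℤ) ≤ (l : ℤ) / 2 + δ

/-- Running digital sum: `s_i = 2·wt(x_1,…,x_i) − i`. -/
def rds (n : ℕ) (x : Fin n → Bool) (i : ℕ) : ℤ := 2 * (subWt n x 0 i : ℤ) - i

/-- `dis x` = max of the RDS sequence minus its min. -/
def dis (n : ℕ) (x : Fin n → Bool) : ℤ :=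
  Finset.sup' (Finset.range (n + 1)) Finset.nonempty_range_add_one (rds n x)
    - Finset.inf' (Finset.range (n + 1)) Finset.nonempty_range_add_one (rds n x)

/-- Number of `(6,1)`-locally balanced binary words of length `n`. -/
noncomputable def f (n : ℕ) : ℕ := Nat.card {x : Fin n → Bool // locBal 6 1 n x}

/-- `x` has the list `z` as a prefix. -/
def hasPrefix (n : ℕ) (x : Fin n → Bool) (z : List Bool) : Prop :=
  ∀ j : Fin z.length, ∃ h : (j : ℕ) < n, x ⟨j, h⟩ = z.get j

/-- Number of `(6,1)`-locally balanced words of length `n` with prefix `z`. -/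
noncomputable def fP (n : ℕ) (z : List Bool) : ℕ :=
  Nat.card {x : Fin n → Bool // locBal 6 1 n x ∧ hasPrefix n x z}

/-- Number of `(6,1)`-locally balanced words of length `n` whose first `s` entries have weight `t`. -/
noncomputable def fW (n s t : ℕ) : ℕ :=
  Nat.card {x : Fin n → Bool // locBal 6 1 n x ∧ subWt n x 0 s = t}

lemma subWt_eq_sum (n : ℕ) (x : Fin n → Bool) (i l : ℕ) :
    subWt n x i l = ∑ j : Fin n, if i ≤ (j:ℕ) ∧ (j:ℕ) < i + l ∧ x j = true then 1 else 0 := by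
  rw [subWt, Finset.card_filter]

lemma subWt_cons_succ (n : ℕ) (b : Bool) (y : Fin n → Bool) (i l : ℕ) :
    subWt (n+1) (Fin.cons b y) (i+1) l = subWt n y i l := by
  rw [subWt_eq_sum, subWt_eq_sum, Fin.sum_univ_succ]
  simp only [Fin.cons_zero, Fin.cons_succ, Fin.val_zero, Fin.val_succ]
  rw [if_neg (fun h => absurd h.1 (by omega))]
  rw [zero_add]
  refine Finset.sum_congr rfl fun j _ => ?_
  exact if_congr (by constructor <;> rintro ⟨h1,h2,h3⟩ <;> exact ⟨by omega, by omega, h3⟩) rfl rfl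

lemma subWt_cons_zero (n : ℕ) (b : Bool) (y : Fin n → Bool) (l : ℕ) :
    subWt (n+1) (Fin.cons b y) 0 (l+1) = (if b = true then 1 else 0) + subWt n y 0 l := by
  rw [subWt_eq_sum, subWt_eq_sum, Fin.sum_univ_succ]
  simp only [Fin.cons_zero, Fin.cons_succ, Fin.val_zero, Fin.val_succ]
  congr 1
  · simp
  · refine Finset.sum_congr rfl fun j _ => ?_
    exact if_congr (by constructor <;> rintro ⟨h1,h2,h3⟩ <;> exact ⟨by omega, by omega, h3⟩) rfl rfl

lemma subWt_mono (n : ℕ) (x : Fin n → Bool) (i l : ℕ) :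
    subWt n x i l ≤ subWt n x i (l+1) := by
  apply Finset.card_le_card
  intro j hj
  simp only [Finset.mem_filter, Finset.mem_univ, true_and] at *
  exact ⟨hj.1, by omega, hj.2.2⟩

lemma subWt_succ_le (n : ℕ) (x : Fin n → Bool) (i l : ℕ) :
    subWt n x i (l+1) ≤ subWt n x i l + 1 := by
  have h : (Finset.univ.filter (fun j : Fin n => i ≤ (j:ℕ) ∧ (j:ℕ) < i + (l+1) ∧ x j = true))
      ⊆ (Finset.univ.filter (fun j : Fin n => i ≤ (j:ℕ) ∧ (j:ℕ) < i + l ∧ x j = true))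
        ∪ (Finset.univ.filter (fun j : Fin n => (j:ℕ) = i + l)) := by
    intro j hj
    simp only [Finset.mem_filter, Finset.mem_union, Finset.mem_univ, true_and] at *
    rcases hj with ⟨h1, h2, h3⟩
    by_cases hc : (j:ℕ) = i + l
    · exact Or.inr hc
    · exact Or.inl ⟨h1, by omega, h3⟩
  have h1 : (Finset.univ.filter (fun j : Fin n => (j:ℕ) = i + l)).card ≤ 1 := by
    apply Finset.card_le_one.mpr
    intro a ha b hb
    simp only [Finset.mem_filter, Finset.mem_univ, true_and] at ha hb
    exact Fin.ext (by omega)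
  calc subWt n x i (l+1) ≤ _ := Finset.card_le_card h
    _ ≤ _ + _ := Finset.card_union_le _ _
    _ ≤ subWt n x i l + 1 := by unfold subWt; omega

lemma locBal_iff (n : ℕ) (x : Fin n → Bool) :
    locBal 6 1 n x ↔ ∀ i, i + 6 ≤ n → 2 ≤ subWt n x i 6 ∧ subWt n x i 6 ≤ 4 := by
  unfold locBal
  constructor <;> intro h i hi <;> have h' := h i hi <;> norm_num at h' ⊢ <;> omega

lemma locBal_cons_iff (n : ℕ) (b : Bool) (y : Fin (n+1) → Bool) :
    locBal 6 1 (n+2) (Fin.cons b y) ↔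
      locBal 6 1 (n+1) y ∧
        (4 ≤ n → 2 ≤ subWt (n+2) (Fin.cons b y) 0 6 ∧ subWt (n+2) (Fin.cons b y) 0 6 ≤ 4) := by
  rw [locBal_iff, locBal_iff]
  constructor
  · intro h
    refine ⟨fun i hi => ?_, fun h4 => h 0 (by omega)⟩
    rw [← subWt_cons_succ (n+1) b y i 6]
    exact h (i+1) (by omega)
  · rintro ⟨h1, h2⟩ i hi
    cases i with
    | zero => exact h2 (by omega)
    | succ i => rw [subWt_cons_succ]; exact h1 i (by omega)

lemma tail_mem (n w : ℕ) (x : Fin (n+2) → Bool) (hx : locBal 6 1 (n+2) x)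
    (hw : subWt (n+2) x 0 5 = w) :
    locBal 6 1 (n+1) (Fin.tail x) ∧
      subWt (n+1) (Fin.tail x) 0 4 = w - (if x 0 = true then 1 else 0) ∧
      (if x 0 = true then 1 else 0) ≤ w := by
  have hc : Fin.cons (x 0) (Fin.tail x) = x := Fin.cons_self_tail x
  rw [← hc] at hx hw
  refine ⟨((locBal_cons_iff n (x 0) (Fin.tail x)).mp hx).1, ?_⟩
  rw [show (5:ℕ) = 4 + 1 from rfl, subWt_cons_zero] at hw
  cases hxb : x 0 <;> simp [hxb] at hw ⊢ <;> omega

lemma cons_mem (n w : ℕ) (b : Bool) (y : Fin (n+1) → Bool)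
    (hy : locBal 6 1 (n+1) y)
    (hbt : (if b = true then 1 else 0) + subWt (n+1) y 0 4 = w)
    (hw2 : 2 ≤ w) (hw3 : w ≤ 3) :
    locBal 6 1 (n+2) (Fin.cons b y) ∧ subWt (n+2) (Fin.cons b y) 0 5 = w := by
  have h5 : subWt (n+2) (Fin.cons b y) 0 5 = (if b = true then 1 else 0) + subWt (n+1) y 0 4 :=
    subWt_cons_zero (n+1) b y 4
  have h6 : subWt (n+2) (Fin.cons b y) 0 6 = (if b = true then 1 else 0) + subWt (n+1) y 0 5 :=
    subWt_cons_zero (n+1) b y 5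
  have hm : subWt (n+1) y 0 4 ≤ subWt (n+1) y 0 5 := subWt_mono _ _ _ _
  have hm2 : subWt (n+1) y 0 5 ≤ subWt (n+1) y 0 4 + 1 := subWt_succ_le _ _ _ _
  exact ⟨(locBal_cons_iff n b y).mpr ⟨hy, fun _ => by omega⟩, by omega⟩

noncomputable def fW_rec_equiv (n w : ℕ) (hw2 : 2 ≤ w) (hw3 : w ≤ 3) :
    {x : Fin (n+2) → Bool // locBal 6 1 (n+2) x ∧ subWt (n+2) x 0 5 = w} ≃
      ({y : Fin (n+1) → Bool // locBal 6 1 (n+1) y ∧ subWt (n+1) y 0 4 = w - 1} ⊕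
       {y : Fin (n+1) → Bool // locBal 6 1 (n+1) y ∧ subWt (n+1) y 0 4 = w}) where
  toFun x :=
    if hb : x.1 0 = true then
      Sum.inl ⟨Fin.tail x.1, by
        obtain ⟨h1, h2, h3⟩ := tail_mem n w x.1 x.2.1 x.2.2
        rw [hb] at h2
        simp at h2
        exact ⟨h1, h2⟩⟩
    else
      Sum.inr ⟨Fin.tail x.1, by
        obtain ⟨h1, h2, h3⟩ := tail_mem n w x.1 x.2.1 x.2.2
        simp [hb] at h2
        exact ⟨h1, h2⟩⟩
  invFun s :=
    match s with
    | Sum.inl y => ⟨Fin.cons true y.1,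
        cons_mem n w true y.1 y.2.1 (by rw [y.2.2]; simp; omega) hw2 hw3⟩
    | Sum.inr y => ⟨Fin.cons false y.1,
        cons_mem n w false y.1 y.2.1 (by rw [y.2.2]; simp) hw2 hw3⟩
  left_inv x := by
    by_cases hb : x.1 0 = true
    · simp only [dif_pos hb]
      exact Subtype.ext (by have h := Fin.cons_self_tail x.1; rw [hb] at h; exact h)
    · simp only [dif_neg hb]
      have hb' : x.1 0 = false := by
        cases h : x.1 0
        · rfl
        · exact absurd h hb
      exact Subtype.ext (by have h := Fin.cons_self_tail x.1; rw [hb'] at h; exact h)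
  right_inv s := by
    cases s with
    | inl y =>
      dsimp only
      rw [dif_pos (show (Fin.cons true y.1 : Fin (n+2) → Bool) 0 = true from rfl)]
      refine congrArg Sum.inl (Subtype.ext ?_)
      simp
    | inr y =>
      dsimp only
      rw [dif_neg (show ¬ ((Fin.cons false y.1 : Fin (n+2) → Bool) 0 = true) by simp)]
      refine congrArg Sum.inr (Subtype.ext ?_)
      simp


lemma fW_rec (n w : ℕ) (hw2 : 2 ≤ w) (hw3 : w ≤ 3) :
    fW (n+2) 5 w = fW (n+1) 4 (w-1) + fW (n+1) 4 w := by
  unfold fW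
  rw [Nat.card_congr (fW_rec_equiv n w hw2 hw3), Nat.card_sum]

/-- `f_{n+2}(5,2) = f_{n+1}(4,1) + f_{n+1}(4,2)` and `f_{n+2}(5,3) = f_{n+1}(4,2) + f_{n+1}(4,3)`. -/
theorem fW_five_recurrence (n : ℕ) :
    fW (n + 2) 5 2 = fW (n + 1) 4 1 + fW (n + 1) 4 2 ∧
    fW (n + 2) 5 3 = fW (n + 1) 4 2 + fW (n + 1) 4 3 :=
  ⟨fW_rec n 2 (by norm_num) (by norm_num), fW_rec n 3 (by norm_num) (by norm_num)⟩
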